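/- Let a : ℕ → ℤ satisfy a(0) = 1, a(1) = 1, and the quadratic recurrence a(n) = 1 + 2·∑_{m=1}^{n-1} a(m)·a(n−m) for all n ≥ 2. Then a satisfies the linear recurrence n·a(n) = (10n − 14)·a(n−1) + (18 − 9n)·a(n−2) for all n ≥ 2. -/

import Mathlib

open PowerSeries Finset

private theorem stmt_2_aux (a : ℕ → ℤ) (h0 : a 0 = 1) (h1 : a 1 = 1)
    (hrec : ∀ n, 2 ≤ n → a n = 1 + 2 * ∑ m ∈ Finset.Ico 1 n, a m * a (n - m)) (k : ℕ) :
    ((k:ℚ)+2) * (a (k+2) : ℚ) = (10*((k:ℚ)+2)-14) * (a (k+1) : ℚ)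
      + (18-9*((k:ℚ)+2)) * (a k : ℚ) := by
  set G : ℚ⟦X⟧ := PowerSeries.mk (fun n => (a n : ℚ)) with hGdef
  have hcoeffG : ∀ n, coeff n G = (a n : ℚ) := fun n => coeff_mk n _
  have hrecQ : ∀ n, 1 ≤ n → (a n : ℚ) = 1 + 2 * ∑ m ∈ Finset.Ico 1 n, (a m : ℚ) * (a (n-m) : ℚ) := by
    intro n hn
    rcases eq_or_lt_of_le hn with h | h
    · simp [← h, h1]
    · exact_mod_cast hrec n h
  have hc : ∀ n, 1 ≤ n →
      2 * (∑ m ∈ Finset.range (n+1), (a m : ℚ) * (a (n-m) : ℚ)) - 5 * (a n : ℚ) = -1 := by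
    intro n hn
    have hsplit : ∑ m ∈ Finset.range (n+1), (a m : ℚ) * (a (n-m) : ℚ)
        = 2 * (a n : ℚ) + ∑ m ∈ Finset.Ico 1 n, (a m : ℚ) * (a (n-m) : ℚ) := by
      rw [Finset.sum_range_succ, Finset.range_eq_Ico,
        Finset.sum_eq_sum_Ico_succ_bot (by omega : 0 < n)]
      simp [h0]
      ring
    rw [hsplit]
    have := hrecQ n hn
    linarith
  have h2C : (2 : ℚ⟦X⟧) = C 2 := (map_ofNat C 2).symm
  have h5C : (5 : ℚ⟦X⟧) = C 5 := (map_ofNat C 5).symm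
  have h3C : (3 : ℚ⟦X⟧) = C 3 := (map_ofNat C 3).symm
  have hcoeffP : ∀ n, coeff n (2*G^2 - 5*G)
      = 2 * (∑ m ∈ Finset.range (n+1), (a m : ℚ) * (a (n-m) : ℚ)) - 5 * (a n : ℚ) := by
    intro n
    rw [map_sub, h2C, h5C, coeff_C_mul, coeff_C_mul, hcoeffG, pow_two, coeff_mul,
      Finset.Nat.sum_antidiagonal_eq_sum_range_succ_mk]
    simp [hcoeffG]
  have hP0 : 2 * (∑ m ∈ Finset.range (0+1), (a m : ℚ) * (a (0-m) : ℚ)) - 5 * (a 0 : ℚ) = -3 := by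
    simp [h0]; norm_num
  have hE : (1 - X) * (2*G^2 - 5*G) = 2*X - 3 := by
    ext n
    rw [sub_mul, one_mul, map_sub]
    cases n with
    | zero =>
      rw [coeff_zero_X_mul, hcoeffP 0, hP0]
      simp [h2C, h3C, coeff_C, coeff_C_mul, coeff_X]
    | succ m =>
      rw [coeff_succ_X_mul, hcoeffP, hcoeffP, map_sub, h2C, h3C, coeff_C_mul, coeff_X,
        coeff_C]
      cases m with
      | zero => rw [hc 1 le_rfl, hP0]; norm_num
      | succ j => rw [hc _ (by omega), hc _ (by omega)]; norm_num
  have hDG2 : d⁄dX ℚ (G^2) = 2 * G * d⁄dX ℚ G := by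
    rw [pow_two, Derivation.leibniz, smul_eq_mul]; ring
  have hDP : d⁄dX ℚ (2*G^2 - 5*G) = (4*G-5) * d⁄dX ℚ G := by
    rw [map_sub, Derivation.leibniz, Derivation.leibniz, hDG2,
      show d⁄dX ℚ (2:ℚ⟦X⟧) = 0 from by rw [h2C, derivative_C],
      show d⁄dX ℚ (5:ℚ⟦X⟧) = 0 from by rw [h5C, derivative_C]]
    simp only [smul_eq_mul, mul_zero, add_zero, smul_zero]
    ring
  have hDE : (1-X) * ((4*G-5) * d⁄dX ℚ G) - (2*G^2-5*G) = 2 := by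
    have hthis := congrArg (d⁄dX ℚ) hE
    rw [Derivation.leibniz, smul_eq_mul, smul_eq_mul, hDP,
      show d⁄dX ℚ (1 - X : ℚ⟦X⟧) = -1 from by
        rw [map_sub, derivative_X, Derivation.map_one_eq_zero]; ring,
      show d⁄dX ℚ (2*X - 3 : ℚ⟦X⟧) = 2 from by
        rw [map_sub, h3C, derivative_C, show (2:ℚ⟦X⟧)*X = X+X from by ring, map_add,
          derivative_X]; ring] at hthis
    linear_combination hthis
  have hE2 : (1-X)^2 * ((4*G-5) * d⁄dX ℚ G) = -1 := by
    linear_combination (1-X) * hDE + hE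
  have hH2 : (1-X) * (4*G-5)^2 = 1 - 9*X := by linear_combination 8 * hE
  have hcG : constantCoeff G = 1 := by
    rw [← coeff_zero_eq_constantCoeff, hcoeffG, h0]; norm_num
  have hne : ((4*G-5) * (1-X) : ℚ⟦X⟧) ≠ 0 := by
    intro h
    have hcc := congrArg (constantCoeff) h
    simp only [map_mul, map_sub, map_one, map_ofNat, hcG, constantCoeff_X] at hcc
    norm_num at hcc
  have hmain : (1-X)*((1-9*X) * d⁄dX ℚ G) = 5 - 4*G := by
    apply mul_left_cancel₀ hne
    linear_combination (1-9*X) * hE2 + hH2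
  have h10C : (10:ℚ⟦X⟧) = C 10 := (map_ofNat C 10).symm
  have h9C : (9:ℚ⟦X⟧) = C 9 := (map_ofNat C 9).symm
  have h4C : (4:ℚ⟦X⟧) = C 4 := (map_ofNat C 4).symm
  rw [show (1-X)*((1-9*X) * d⁄dX ℚ G)
      = d⁄dX ℚ G - 10*(X*d⁄dX ℚ G) + 9*(X*(X*(d⁄dX ℚ G))) from by ring] at hmain
  have hx := congrArg (coeff (k+1)) hmain
  rw [map_add, map_sub, map_sub, h10C, h9C, h4C, h5C, coeff_C_mul, coeff_C_mul, coeff_C_mul,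
    coeff_C, coeff_succ_X_mul, coeff_succ_X_mul, coeff_derivative, coeff_derivative,
    hcoeffG, hcoeffG, if_neg (by omega : ¬ (k+1 = 0))] at hx
  cases k with
  | zero =>
    rw [coeff_zero_X_mul] at hx
    push_cast at hx ⊢
    linear_combination hx
  | succ j =>
    rw [coeff_succ_X_mul, coeff_derivative, hcoeffG] at hx
    push_cast at hx ⊢
    linear_combination hx

theorem stmt_2 (a : ℕ → ℤ) (h0 : a 0 = 1) (h1 : a 1 = 1)
    (hrec : ∀ n, 2 ≤ n → a n = 1 + 2 * ∑ m ∈ Finset.Ico 1 n, a m * a (n - m)) :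
    ∀ n : ℕ, 2 ≤ n →
      (n : ℤ) * a n = (10 * n - 14) * a (n - 1) + (18 - 9 * n) * a (n - 2) := by
  intro n hn
  obtain ⟨k, rfl⟩ : ∃ k, n = k + 2 := ⟨n - 2, by omega⟩
  have hx := stmt_2_aux a h0 h1 hrec k
  have e1 : k + 2 - 1 = k + 1 := by omega
  have e2 : k + 2 - 2 = k := by omega
  rw [e1, e2]
  qify
  push_cast at hx ⊢
  linear_combination hx
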